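/- Over a field K of characteristic 2, for a series Σ_{n≥0} αₙXⁿ with α₀ = 1, its shuffle logarithm is given by log⧢(Σ αₙXⁿ) = Σ_{n≥0} α_{2ⁿ}² X^{2^{n+1}} + Σ_{0≤i<j} C(i+j, i) αᵢαⱼ X^{i+j}. -/

import Mathlib

open PowerSeries
open scoped Classical

/-- The shuffle logarithm `log⧢(B) = Σ_{k≥1} (−1)^{k+1} (B−1)^{⧢k}/k` of a series `B` with
constant coefficient `1`, well-defined over any field: by the exponential formula its
`n`-th coefficient (`n ≥ 1`) is the integer polynomial
`Σ_π (−1)^{|π|+1} (|π|−1)! ∏_{b ∈ π} β_{|b|}` in the coefficients of `B`, where `π` runs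
over the set partitions of an `n`-element set. -/
noncomputable def logSh {K : Type*} [Field K] (B : PowerSeries K) : PowerSeries K :=
  PowerSeries.mk fun n =>
    if n = 0 then 0 else
      ∑ π : Finpartition (Finset.univ : Finset (Fin n)),
        (((-1) ^ (π.parts.card + 1) * (Nat.factorial (π.parts.card - 1) : ℤ) : ℤ) : K) *
          ∏ b ∈ π.parts, coeff b.card B

open Nat

lemma lucas2 (n k : ℕ) : Nat.choose n k % 2 = (Nat.choose (n % 2) (k % 2) * Nat.choose (n / 2) (k / 2)) % 2 :=
  haveI : Fact (Nat.Prime 2) := ⟨Nat.prime_two⟩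
  Choose.choose_modEq_choose_mod_mul_choose_div_nat

lemma choose_half_odd : ∀ m : ℕ, (Nat.choose m (m / 2)) % 2 = 1 ↔ ∃ t : ℕ, m + 1 = 2 ^ t := by
  intro m
  induction m using Nat.strong_induction_on with
  | _ m ih =>
    rcases Nat.eq_zero_or_pos m with rfl | hm0
    · simpa using ⟨0, rfl⟩
    rcases Nat.even_or_odd m with ⟨j, hj⟩ | ⟨j, hj⟩
    · -- m = j + j, j ≥ 1
      subst hj
      have hj0 : 1 ≤ j := by omega
      have h2 : (j + j) / 2 = j := by omega
      rw [h2, lucas2, h2]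
      have hm : (j + j) % 2 = 0 := by omega
      rw [hm]
      have hnot : ¬ ∃ t, j + j + 1 = 2 ^ t := by
        rintro ⟨t, ht⟩
        rcases t with _ | t
        · omega
        · rw [pow_succ] at ht; omega
      simp only [hnot, iff_false]
      rcases Nat.even_or_odd j with ⟨i, hi⟩ | ⟨i, hi⟩
      · -- j even
        have hj2 : j % 2 = 0 := by omega
        rw [hj2]
        simp only [Nat.choose_self, one_mul, Nat.choose]
        intro hcon
        have := (ih j (by omega)).mp hcon
        rcases this with ⟨t, ht⟩
        rcases t with _ | t
        · omega
        · rw [pow_succ] at ht; omega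
      · -- j odd
        have hj2 : j % 2 = 1 := by omega
        rw [hj2]
        simp
    · -- m = 2j+1
      subst hj
      have h2 : (2*j+1) / 2 = j := by omega
      rw [h2, lucas2, h2]
      have hm : (2*j+1) % 2 = 1 := by omega
      have hc1 : Nat.choose 1 (j % 2) = 1 := by
        have : j % 2 = 0 ∨ j % 2 = 1 := by omega
        rcases this with h | h <;> simp [h]
      rw [hm, hc1, one_mul]
      rw [ih j (by omega)]
      constructor
      · rintro ⟨t, ht⟩
        exact ⟨t + 1, by rw [pow_succ]; omega⟩
      · rintro ⟨t, ht⟩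
        rcases t with _ | t
        · omega
        · exact ⟨t, by rw [pow_succ] at ht; omega⟩

lemma central_odd (k : ℕ) (hk : 1 ≤ k) :
    (Nat.choose (2 * k - 1) (k - 1)) % 2 = 1 ↔ ∃ t : ℕ, k = 2 ^ t := by
  have h1 : (2 * k - 1) % 2 = 1 := by omega
  have h2 : (2 * k - 1) / 2 = k - 1 := by omega
  rw [lucas2, h1, h2]
  have hc1 : Nat.choose 1 ((k - 1) % 2) = 1 := by
    have : (k-1) % 2 = 0 ∨ (k-1) % 2 = 1 := by omega
    rcases this with h | h <;> simp [h]
  rw [hc1, one_mul, choose_half_odd]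
  constructor <;> rintro ⟨t, ht⟩ <;> exact ⟨t, by omega⟩

section LogShAux

variable {K : Type*} [Field K] [CharP K 2]

lemma cast_odd_even (m : ℕ) : ((m : K) = 1 ↔ m % 2 = 1) ∧ ((m : K) = 0 ↔ m % 2 = 0) := by
  constructor
  · constructor
    · intro h
      by_contra hc
      have h0 : m % 2 = 0 := by omega
      have : (m : K) = 0 := by
        have := (CharP.cast_eq_zero_iff K 2 m).mpr (by omega)
        exact this
      rw [this] at h
      exact one_ne_zero h.symm
    · intro h
      obtain ⟨q, hq⟩ : ∃ q, m = 2 * q + 1 := ⟨m / 2, by omega⟩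
      subst hq
      push_cast
      rw [CharTwo.two_eq_zero]
      ring
  · constructor
    · intro h
      by_contra hc
      have h1 : m % 2 = 1 := by omega
      obtain ⟨q, hq⟩ : ∃ q, m = 2 * q + 1 := ⟨m / 2, by omega⟩
      subst hq
      push_cast at h
      rw [CharTwo.two_eq_zero] at h
      simp at h
    · intro h
      exact (CharP.cast_eq_zero_iff K 2 m).mpr (by omega)

lemma cast_choose_pascal (n i : ℕ) (h1 : 1 ≤ i) (h2 : 2 * i < n) :
    (n - 1).choose (i - 1) + (n - 1).choose (n - i - 1) = n.choose i := by
  have hsymm : (n - 1).choose (n - i - 1) = (n - 1).choose i := by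
    have : n - i - 1 = (n - 1) - i := by omega
    rw [this, Nat.choose_symm (by omega)]
  rw [hsymm]
  have hn : n = (n - 1) + 1 := by omega
  have hi : i = (i - 1) + 1 := by omega
  rw [hn, hi, Nat.choose_succ_succ']
  congr 1 <;> omega

lemma logShKey (n : ℕ) (hn : 1 ≤ n) (f : ℕ → K) :
    ∑ i ∈ Finset.range (n + 1),
        (if 1 ≤ i then (((n - 1).choose (i - 1) : ℕ) : K) else 0) * (f i * f (n - i))
    = (if ∃ t : ℕ, n = 2 ^ (t + 1) then f (n / 2) ^ 2 else 0) +
        ∑ i ∈ Finset.range n, (if 2 * i < n then (n.choose i : K) * f i * f (n - i) else 0) := by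
  classical
  set c : ℕ → K := fun i => (((n - 1).choose (i - 1) : ℕ) : K) with hc
  -- pointwise three-way split
  have split : ∀ i ∈ Finset.range (n + 1),
      (if 1 ≤ i then c i else 0) * (f i * f (n - i)) =
        ((if 2 * i < n ∧ 1 ≤ i then c i * (f i * f (n - i)) else 0) +
         (if 2 * i = n ∧ 1 ≤ i then c i * (f i * f (n - i)) else 0)) +
         (if n < 2 * i ∧ 1 ≤ i then c i * (f i * f (n - i)) else 0) := by
    intro i _
    split_ifs <;> first | omega | ring
  rw [Finset.sum_congr rfl split, Finset.sum_add_distrib, Finset.sum_add_distrib]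
  -- reflect the upper sum
  have reflect : ∑ i ∈ Finset.range (n + 1),
      (if n < 2 * i ∧ 1 ≤ i then c i * (f i * f (n - i)) else 0)
      = ∑ i ∈ Finset.range (n + 1),
        (if 2 * i < n then c (n - i) * (f i * f (n - i)) else 0) := by
    rw [← Finset.sum_range_reflect]
    apply Finset.sum_congr rfl
    intro i hi
    rw [Finset.mem_range] at hi
    have hni : n + 1 - 1 - i = n - i := by omega
    rw [hni]
    have hcond : (n < 2 * (n - i) ∧ 1 ≤ n - i) ↔ 2 * i < n := by omega
    by_cases h : 2 * i < n
    · rw [if_pos (hcond.mpr h), if_pos h]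
      have : n - (n - i) = i := by omega
      rw [this]; ring
    · rw [if_neg (fun hx => h (hcond.mp hx)), if_neg h]
  rw [reflect]
  -- combine lower + reflected
  have combine : ∑ i ∈ Finset.range (n + 1),
        (if 2 * i < n ∧ 1 ≤ i then c i * (f i * f (n - i)) else 0)
      + ∑ i ∈ Finset.range (n + 1),
        (if 2 * i < n then c (n - i) * (f i * f (n - i)) else 0)
      = ∑ i ∈ Finset.range n, (if 2 * i < n then (n.choose i : K) * f i * f (n - i) else 0) := by
    rw [← Finset.sum_add_distrib]
    rw [Finset.sum_range_succ]
    have hlast : ((if 2 * n < n ∧ 1 ≤ n then c n * (f n * f (n - n)) else 0) +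
        (if 2 * n < n then c (n - n) * (f n * f (n - n)) else 0)) = 0 := by
      rw [if_neg (by omega), if_neg (by omega)]; ring
    rw [hlast, add_zero]
    apply Finset.sum_congr rfl
    intro i hi
    rw [Finset.mem_range] at hi
    by_cases h : 2 * i < n
    · rcases Nat.eq_zero_or_pos i with rfl | hi1
      · rw [if_neg (show ¬(2 * 0 < n ∧ 1 ≤ 0) by omega), if_pos h, if_pos h, zero_add]
        have hcn : c (n - 0) = 1 := by
          simp only [hc, Nat.sub_zero]
          rw [Nat.choose_self]; exact Nat.cast_one
        rw [hcn, Nat.choose_zero_right]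
        push_cast; ring
      · rw [if_pos ⟨h, hi1⟩, if_pos h, if_pos h]
        have hci : c i + c (n - i) = (n.choose i : K) := by
          simp only [hc]
          rw [← Nat.cast_add, cast_choose_pascal n i hi1 h]
        rw [← hci]; ring
    · rw [if_neg (fun hx => h hx.1), if_neg h, if_neg h]; ring
  rw [add_right_comm, combine, add_comm]
  congr 1
  -- middle term
  rcases Nat.even_or_odd n with ⟨k, hk⟩ | ⟨k, hk⟩
  · -- n = k + k, k ≥ 1
    have hk1 : 1 ≤ k := by omega
    have hmid : ∀ i ∈ Finset.range (n + 1),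
        (if 2 * i = n ∧ 1 ≤ i then c i * (f i * f (n - i)) else 0)
        = (if i = k then c k * (f k * f k) else 0) := by
      intro i _
      by_cases h : i = k
      · subst h
        rw [if_pos ⟨by omega, hk1⟩, if_pos rfl]
        have : n - i = i := by omega
        rw [this]
      · rw [if_neg (by omega), if_neg h]
    rw [Finset.sum_congr rfl hmid, Finset.sum_ite_eq' (Finset.range (n+1)) k,
      if_pos (by rw [Finset.mem_range]; omega)]
    have hck : c k = ((2 * k - 1).choose (k - 1) : K) := by
      simp only [hc]; congr 2; omega
    have hiff : (∃ t : ℕ, n = 2 ^ (t + 1)) ↔ (∃ t : ℕ, k = 2 ^ t) := by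
      constructor <;> rintro ⟨t, ht⟩ <;> exact ⟨t, by rw [pow_succ] at *; omega⟩
    by_cases hpow : ∃ t : ℕ, k = 2 ^ t
    · rw [if_pos (hiff.mpr hpow)]
      have hodd : ((2 * k - 1).choose (k - 1)) % 2 = 1 := (central_odd k hk1).mpr hpow
      have : c k = 1 := by rw [hck]; exact (cast_odd_even _).1.mpr hodd
      rw [this]
      have : n / 2 = k := by omega
      rw [this]; ring
    · rw [if_neg (fun hx => hpow (hiff.mp hx))]
      have heven : ((2 * k - 1).choose (k - 1)) % 2 = 0 := by
        rcases Nat.mod_two_eq_zero_or_one ((2 * k - 1).choose (k - 1)) with h | h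
        · exact h
        · exact absurd ((central_odd k hk1).mp h) hpow
      have : c k = 0 := by rw [hck]; exact (cast_odd_even _).2.mpr heven
      rw [this]; ring
  · -- n odd
    have h0 : ∀ i ∈ Finset.range (n + 1),
        (if 2 * i = n ∧ 1 ≤ i then c i * (f i * f (n - i)) else 0) = 0 := by
      intro i _
      rw [if_neg (by omega)]
    rw [Finset.sum_congr rfl h0, Finset.sum_const_zero]
    rw [if_neg]
    rintro ⟨t, ht⟩
    rw [pow_succ] at ht
    omega

variable {n : ℕ}

/-- The partition of `univ : Finset (Fin n)` into `S` and its complement (degenerate cases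
handled by `ofErase`). -/
noncomputable def twoPart (n : ℕ) (S : Finset (Fin n)) :
    Finpartition (Finset.univ : Finset (Fin n)) :=
  Finpartition.ofErase {S, Finset.univ \ S}
    (by
      rw [Finset.supIndep_iff_pairwiseDisjoint]
      intro x hx y hy hxy
      simp only [Finset.coe_insert, Finset.coe_singleton, Set.mem_insert_iff,
        Set.mem_singleton_iff] at hx hy
      rcases hx with rfl | rfl <;> rcases hy with rfl | rfl
      · exact absurd rfl hxy
      · exact Finset.disjoint_sdiff
      · exact Finset.sdiff_disjoint
      · exact absurd rfl hxy)
    (by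
      rw [Finset.sup_insert, Finset.sup_singleton, id]
      exact Finset.union_sdiff_of_subset (Finset.subset_univ S))

lemma twoPart_parts {S : Finset (Fin n)} (hS : S.Nonempty) (hSu : S ≠ Finset.univ) :
    (twoPart n S).parts = {S, Finset.univ \ S} := by
  show ({S, Finset.univ \ S} : Finset (Finset (Fin n))).erase ⊥ = _
  apply Finset.erase_eq_of_notMem
  simp only [Finset.bot_eq_empty, Finset.mem_insert, Finset.mem_singleton]
  push_neg
  constructor
  · exact fun h => hS.ne_empty h.symm
  · intro h
    rw [eq_comm, Finset.sdiff_eq_empty_iff_subset, Finset.univ_subset_iff] at h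
    exact hSu h

lemma twoPart_parts_univ (hn : 1 ≤ n) :
    (twoPart n (Finset.univ : Finset (Fin n))).parts = {Finset.univ} := by
  show ({Finset.univ, Finset.univ \ Finset.univ} : Finset (Finset (Fin n))).erase ⊥ = _
  rw [Finset.sdiff_self, Finset.bot_eq_empty]
  ext b
  simp only [Finset.mem_erase, Finset.mem_insert, Finset.mem_singleton]
  constructor
  · rintro ⟨hb, rfl | rfl⟩
    · rfl
    · exact absurd rfl hb
  · rintro rfl
    refine ⟨?_, Or.inl rfl⟩
    have : (⟨0, hn⟩ : Fin n) ∈ (Finset.univ : Finset (Fin n)) := Finset.mem_univ _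
    intro h
    rw [h] at this
    exact absurd this (Finset.notMem_empty _)

lemma parts_card_pos (hn : 1 ≤ n) (π : Finpartition (Finset.univ : Finset (Fin n))) :
    1 ≤ π.parts.card := by
  refine Finset.card_pos.mpr (π.parts_nonempty ?_)
  rw [Finset.bot_eq_empty]
  exact Finset.nonempty_iff_ne_empty.mp ⟨⟨0, hn⟩, Finset.mem_univ _⟩

/-- Any partition of `univ : Finset (Fin n)` with at most 2 parts is `twoPart` of the part
containing the base point. -/
lemma eq_twoPart (hn : 1 ≤ n) (π : Finpartition (Finset.univ : Finset (Fin n)))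
    (hπ : π.parts.card ≤ 2) :
    π = twoPart n (π.part ⟨0, hn⟩) := by
  set a : Fin n := ⟨0, hn⟩
  have ha : a ∈ (Finset.univ : Finset (Fin n)) := Finset.mem_univ _
  have hmem : π.part a ∈ π.parts := π.part_mem.mpr ha
  have hcard := parts_card_pos hn π
  apply Finpartition.ext
  interval_cases h : π.parts.card
  · -- exactly one part
    obtain ⟨b, hb⟩ := Finset.card_eq_one.mp h
    have hbuniv : b = Finset.univ := by
      have := π.sup_parts
      rw [hb, Finset.sup_singleton, id] at this
      exact this
    rw [hb, hbuniv] at hmem ⊢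
    have : π.part a = Finset.univ := Finset.mem_singleton.mp hmem
    rw [this, twoPart_parts_univ hn]
  · -- exactly two parts
    obtain ⟨B, C, hBC, hparts⟩ := Finset.card_eq_two.mp h
    have hsup : B ∪ C = Finset.univ := by
      have := π.sup_parts
      rw [hparts, Finset.sup_insert, Finset.sup_singleton, id] at this
      exact this
    have hdisj : Disjoint B C := by
      have := π.supIndep
      rw [hparts] at this
      exact (Finset.supIndep_pair hBC).mp this
    have hC : Finset.univ \ B = C := by
      rw [← hsup]; exact Finset.union_sdiff_cancel_left hdisj
    have hB : Finset.univ \ C = B := by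
      rw [← hsup]; exact Finset.union_sdiff_cancel_right hdisj
    have hBne : B.Nonempty := π.nonempty_of_mem_parts (by rw [hparts]; exact Finset.mem_insert_self _ _)
    have hCne : C.Nonempty := π.nonempty_of_mem_parts (by rw [hparts]; simp)
    rw [hparts] at hmem
    rcases Finset.mem_insert.mp hmem with hpa | hpa
    · rw [hpa, twoPart_parts hBne ?_, hC, hparts]
      intro hBu
      rw [hBu] at hC
      rw [Finset.sdiff_self] at hC
      exact hCne.ne_empty hC.symm
    · rw [Finset.mem_singleton] at hpa
      rw [hpa, twoPart_parts hCne ?_, hB, hparts, Finset.pair_comm]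
      intro hCu
      rw [hCu] at hB
      rw [Finset.sdiff_self] at hB
      exact hBne.ne_empty hB.symm

lemma sum_parts {K : Type*} [Field K] [CharP K 2] (hn : 1 ≤ n) (f : ℕ → K) (hf0 : f 0 = 1) :
    (∑ π : Finpartition (Finset.univ : Finset (Fin n)),
      (((-1) ^ (π.parts.card + 1) * (Nat.factorial (π.parts.card - 1) : ℤ) : ℤ) : K) *
        ∏ b ∈ π.parts, f b.card)
    = ∑ S ∈ Finset.univ.filter (fun S : Finset (Fin n) => (⟨0, hn⟩ : Fin n) ∈ S),
        f S.card * f (n - S.card) := by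
  classical
  set a : Fin n := ⟨0, hn⟩ with ha_def
  -- Step 1: pointwise evaluation of the coefficient in characteristic 2
  have hpt : ∀ π : Finpartition (Finset.univ : Finset (Fin n)),
      (((-1) ^ (π.parts.card + 1) * (Nat.factorial (π.parts.card - 1) : ℤ) : ℤ) : K) *
          ∏ b ∈ π.parts, f b.card
        = if π.parts.card ≤ 2 then ∏ b ∈ π.parts, f b.card else 0 := by
    intro π
    have hcard := parts_card_pos hn π
    by_cases h1 : π.parts.card = 1
    · rw [h1, if_pos (by omega)]
      norm_num [Nat.factorial]
    by_cases h2 : π.parts.card = 2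
    · rw [h2, if_pos (by omega)]
      norm_num [Nat.factorial]
      rw [CharTwo.neg_eq]
    · rw [if_neg (by omega)]
      have hdvd : (2 : ℕ) ∣ (π.parts.card - 1).factorial :=
        Nat.dvd_factorial (by omega) (by omega)
      have hz : ((Nat.factorial (π.parts.card - 1) : ℤ) : K) = 0 := by
        rw [Int.cast_natCast]
        exact (CharP.cast_eq_zero_iff K 2 _).mpr hdvd
      rw [Int.cast_mul, hz, mul_zero, zero_mul]
  rw [Finset.sum_congr rfl (fun π _ => hpt π), ← Finset.sum_filter]
  -- Step 2: bijection between partitions with ≤ 2 parts and subsets containing `a`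
  refine Finset.sum_nbij' (fun π => π.part a) (fun S => twoPart n S) ?_ ?_ ?_ ?_ ?_
  · intro π hπ
    simp only [Finset.mem_filter, Finset.mem_univ, true_and]
    exact π.mem_part (Finset.mem_univ a)
  · intro S hS
    simp only [Finset.mem_filter, Finset.mem_univ, true_and] at hS ⊢
    calc (twoPart n S).parts.card
        ≤ ({S, Finset.univ \ S} : Finset (Finset (Fin n))).card := Finset.card_erase_le
      _ ≤ _ + 1 := Finset.card_insert_le _ _
      _ ≤ 2 := by rw [Finset.card_singleton]
  · intro π hπ
    simp only [Finset.mem_filter, Finset.mem_univ, true_and] at hπ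
    exact (eq_twoPart hn π hπ).symm
  · intro S hS
    simp only [Finset.mem_filter, Finset.mem_univ, true_and] at hS
    have hSne : S.Nonempty := ⟨a, hS⟩
    by_cases hSu : S = Finset.univ
    · subst hSu
      exact Finpartition.part_eq_of_mem _ (by rw [twoPart_parts_univ hn]; exact Finset.mem_singleton_self _) hS
    · exact Finpartition.part_eq_of_mem _ (by rw [twoPart_parts hSne hSu]; exact Finset.mem_insert_self _ _) hS
  · intro π hπ
    simp only [Finset.mem_filter, Finset.mem_univ, true_and] at hπ
    show ∏ b ∈ π.parts, f b.card = f (π.part a).card * f (n - (π.part a).card)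
    set S : Finset (Fin n) := π.part a with hS_def
    have haS : a ∈ S := π.mem_part (Finset.mem_univ a)
    have hSne : S.Nonempty := ⟨a, haS⟩
    have hparts : π.parts = (twoPart n S).parts := by rw [eq_twoPart hn π hπ]
    by_cases hSu : S = Finset.univ
    · rw [hparts, hSu, twoPart_parts_univ hn, Finset.prod_singleton]
      have hcu : (Finset.univ : Finset (Fin n)).card = n := by
        rw [Finset.card_univ, Fintype.card_fin]
      simp [hSu, hcu, hf0]
    · rw [hparts, twoPart_parts hSne hSu]
      have hne : S ≠ Finset.univ \ S := by
        intro h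
        have : a ∈ Finset.univ \ S := h ▸ haS
        exact (Finset.mem_sdiff.mp this).2 haS
      rw [Finset.prod_pair hne]
      congr 1
      rw [Finset.card_sdiff_of_subset (Finset.subset_univ S), Finset.card_univ, Fintype.card_fin]

lemma sum_subsets {K : Type*} [Field K] (hn : 1 ≤ n) (f : ℕ → K) :
    (∑ S ∈ Finset.univ.filter (fun S : Finset (Fin n) => (⟨0, hn⟩ : Fin n) ∈ S),
        f S.card * f (n - S.card))
    = ∑ i ∈ Finset.range (n + 1),
        (if 1 ≤ i then (((n - 1).choose (i - 1) : ℕ) : K) else 0) * (f i * f (n - i)) := by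
  classical
  set a : Fin n := ⟨0, hn⟩ with ha_def
  set U : Finset (Fin n) := Finset.univ.erase a with hU_def
  have hUcard : U.card = n - 1 := by
    rw [hU_def, Finset.card_erase_of_mem (Finset.mem_univ a), Finset.card_univ, Fintype.card_fin]
  have step1 : (∑ S ∈ Finset.univ.filter (fun S : Finset (Fin n) => a ∈ S),
        f S.card * f (n - S.card))
      = ∑ T ∈ U.powerset, f (T.card + 1) * f (n - (T.card + 1)) := by
    refine Finset.sum_nbij' (fun S => S.erase a) (fun T => insert a T) ?_ ?_ ?_ ?_ ?_
    · intro S hS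
      rw [Finset.mem_powerset]
      exact Finset.erase_subset_erase a (Finset.subset_univ S)
    · intro T hT
      simp only [Finset.mem_filter, Finset.mem_univ, true_and]
      exact Finset.mem_insert_self a T
    · intro S hS
      simp only [Finset.mem_filter, Finset.mem_univ, true_and] at hS
      exact Finset.insert_erase hS
    · intro T hT
      rw [Finset.mem_powerset] at hT
      have haT : a ∉ T := fun h => Finset.notMem_erase a Finset.univ (hT h)
      exact Finset.erase_insert haT
    · intro S hS
      simp only [Finset.mem_filter, Finset.mem_univ, true_and] at hS
      have h1 : 1 ≤ S.card := Finset.card_pos.mpr ⟨a, hS⟩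
      have : (S.erase a).card = S.card - 1 := Finset.card_erase_of_mem hS
      rw [this]
      congr 2 <;> omega
  rw [step1, Finset.sum_powerset, hUcard]
  have hr : n - 1 + 1 = n := by omega
  rw [hr, Finset.sum_range_succ']
  have h0 : (if 1 ≤ 0 then (((n - 1).choose (0 - 1) : ℕ) : K) else 0) * (f 0 * f (n - 0)) = 0 := by
    rw [if_neg (by omega), zero_mul]
  rw [h0, add_zero]
  apply Finset.sum_congr rfl
  intro j hj
  rw [Finset.mem_range] at hj
  have hinner : ∀ T ∈ Finset.powersetCard j U,
      f (T.card + 1) * f (n - (T.card + 1)) = f (j + 1) * f (n - (j + 1)) := by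
    intro T hT
    rw [(Finset.mem_powersetCard.mp hT).2]
  rw [Finset.sum_congr rfl hinner, Finset.sum_const, Finset.card_powersetCard, hUcard,
    nsmul_eq_mul]
  rw [if_pos (by omega : 1 ≤ j + 1)]
  have : j + 1 - 1 = j := by omega
  rw [this]

end LogShAux

/-- Over a field of characteristic `2`, for `A = Σ αₙXⁿ` with `α₀ = 1`,
`log⧢(A) = Σ_{n≥0} α_{2ⁿ}² X^{2^{n+1}} + Σ_{0≤i<j} C(i+j,i) αᵢαⱼ X^{i+j}`. -/

theorem logSh_char_two {K : Type*} [Field K] [CharP K 2]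
    (A : PowerSeries K) (hA : constantCoeff A = 1) :
    logSh A = PowerSeries.mk fun m =>
      (if ∃ n : ℕ, m = 2 ^ (n + 1) then (coeff (m / 2) A) ^ 2 else 0) +
        ∑ i ∈ Finset.range m,
          if 2 * i < m then (m.choose i : K) * coeff i A * coeff (m - i) A else 0 := by
  ext m
  rw [logSh, coeff_mk, coeff_mk]
  by_cases hm : m = 0
  · subst hm
    rw [if_pos rfl]
    have hne : ¬ ∃ t : ℕ, (0 : ℕ) = 2 ^ (t + 1) := by
      rintro ⟨t, ht⟩
      have : 0 < 2 ^ (t + 1) := Nat.pow_pos (by norm_num : 0 < 2)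
      omega
    rw [if_neg hne, Finset.range_zero, Finset.sum_empty, add_zero]
  · have hm1 : 1 ≤ m := by omega
    rw [if_neg hm]
    have hf0 : (fun i => coeff i A) 0 = 1 := by
      simpa using hA
    rw [sum_parts hm1 (fun i => coeff i A) hf0, sum_subsets hm1 (fun i => coeff i A),
      logShKey m hm1 (fun i => coeff i A)]
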